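/- If A₀ : D(A₀) → H is a strictly positive self-adjoint operator on a Hilbert space H, then the operator A on X = D(A₀^{1/2}) × H, defined by A(w₁, w₂) = (w₂, −A₀ w₁) with domain D(A) = D(A₀) × D(A₀^{1/2}), is skew-adjoint, where X is endowed with the inner product ⟨(u₁,u₂),(v₁,v₂)⟩_X = ⟨A₀^{1/2} u₁, A₀^{1/2} v₁⟩ + ⟨u₂, v₂⟩. -/

import Mathlib

/-- The wave operator `A(w₁,w₂) = (w₂, −A₀w₁)` on `X = D(A₀^{1/2}) × H`, with domain
`D(A) = D(A₀) × D(A₀^{1/2})` and the energy inner product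
`⟨(u₁,u₂),(v₁,v₂)⟩_X = ⟨A₀^{1/2}u₁, A₀^{1/2}v₁⟩ + ⟨u₂,v₂⟩`, is skew-adjoint:
it is skew-symmetric and the graph of its adjoint is contained in the graph of `−A`.
Here `A₀` is strictly positive self-adjoint with square root `S = A₀^{1/2}`. -/
theorem stmt15 {H : Type*} [NormedAddCommGroup H] [InnerProductSpace ℂ H] [CompleteSpace H]
    (A0 S : H →ₗ[ℂ] H) (D1 Dhalf : Submodule ℂ H)
    (hD1h : D1 ≤ Dhalf)
    (hdense : Dense (Dhalf : Set H))
    -- `S = A₀^{1/2}`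
    (hSS : ∀ x ∈ D1, S (S x) = A0 x)
    (hSD1 : ∀ x ∈ D1, S x ∈ Dhalf)
    (hSsym : ∀ x ∈ Dhalf, ∀ y ∈ Dhalf, (inner ℂ (S x) y : ℂ) = inner ℂ x (S y))
    -- strict positivity of `A₀`
    (m : ℝ) (hm : 0 < m)
    (hpos : ∀ x ∈ D1, m * ‖x‖ ^ 2 ≤ (inner ℂ (A0 x) x : ℂ).re)
    -- self-adjointness of `A₀` : symmetry and maximality
    (hsymA : ∀ x ∈ D1, ∀ y ∈ D1, (inner ℂ (A0 x) y : ℂ) = inner ℂ x (A0 y))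
    (hmaxA : ∀ v f : H, (∀ u ∈ D1, (inner ℂ (A0 u) v : ℂ) = inner ℂ u f) →
      v ∈ D1 ∧ A0 v = f) :
    -- skew-symmetry of `A` for the energy inner product:
    -- `⟨A(w₁,w₂),(v₁,v₂)⟩_X = −⟨(w₁,w₂),A(v₁,v₂)⟩_X` on `D(A) = D(A₀) × D(A₀^{1/2})`
    (∀ w₁ ∈ D1, ∀ w₂ ∈ Dhalf, ∀ v₁ ∈ D1, ∀ v₂ ∈ Dhalf,
      (inner ℂ (S w₂) (S v₁) : ℂ) + inner ℂ (-(A0 w₁)) v₂ =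
        -((inner ℂ (S w₁) (S v₂) : ℂ) + inner ℂ w₂ (-(A0 v₁)))) ∧
    -- `D(A*) ⊆ D(A)` with `A* = −A` : if `(v₁,v₂)` and `(f₁,f₂)` satisfy the defining
    -- relation of the adjoint, then `(v₁,v₂) ∈ D(A)` and `(f₁,f₂) = −A(v₁,v₂)`
    (∀ v₁ ∈ Dhalf, ∀ (v₂ : H), ∀ f₁ ∈ Dhalf, ∀ (f₂ : H),
      (∀ w₁ ∈ D1, ∀ w₂ ∈ Dhalf,
        (inner ℂ (S w₂) (S v₁) : ℂ) + inner ℂ (-(A0 w₁)) v₂ =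
          (inner ℂ (S w₁) (S f₁) : ℂ) + inner ℂ w₂ f₂) →
      v₁ ∈ D1 ∧ v₂ ∈ Dhalf ∧ f₁ = -v₂ ∧ f₂ = A0 v₁) := by
  constructor
  · intro w₁ hw₁ w₂ hw₂ v₁ hv₁ v₂ hv₂
    have h1 : (inner ℂ (S w₂) (S v₁) : ℂ) = inner ℂ w₂ (A0 v₁) := by
      rw [hSsym w₂ hw₂ (S v₁) (hSD1 v₁ hv₁), hSS v₁ hv₁]
    have h2 : (inner ℂ (A0 w₁) v₂ : ℂ) = inner ℂ (S w₁) (S v₂) := by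
      rw [← hSS w₁ hw₁, hSsym (S w₁) (hSD1 w₁ hw₁) v₂ hv₂]
    rw [inner_neg_left, inner_neg_right, h1, h2]; ring
  · intro v₁ hv₁ v₂ f₁ hf₁ f₂ hrel
    have key1 : ∀ u ∈ D1, (inner ℂ (A0 u) v₁ : ℂ) = inner ℂ u f₂ := by
      intro u hu
      have := hrel 0 D1.zero_mem u (hD1h hu)
      simp only [map_zero, inner_zero_left, neg_zero, zero_add, add_zero] at this
      rw [← hSS u hu, hSsym (S u) (hSD1 u hu) v₁ hv₁, this]
    obtain ⟨hv1D, hA0v1⟩ := hmaxA v₁ f₂ key1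
    have key2 : ∀ u ∈ D1, (inner ℂ (A0 u) (f₁ + v₂) : ℂ) = inner ℂ u (0 : H) := by
      intro u hu
      have := hrel u hu 0 Dhalf.zero_mem
      simp only [map_zero, inner_zero_left, inner_neg_left, zero_add] at this
      have hS : (inner ℂ (A0 u) f₁ : ℂ) = inner ℂ (S u) (S f₁) := by
        rw [← hSS u hu, hSsym (S u) (hSD1 u hu) f₁ hf₁]
      rw [inner_add_right, inner_zero_right, hS]; linear_combination -this
    obtain ⟨hzD, hz0⟩ := hmaxA (f₁ + v₂) 0 key2
    have hz : f₁ + v₂ = 0 := by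
      have hp := hpos (f₁ + v₂) hzD
      rw [hz0, inner_zero_left] at hp
      rw [Complex.zero_re] at hp
      have hn : ‖f₁ + v₂‖ ^ 2 ≤ 0 := by nlinarith [sq_nonneg ‖f₁ + v₂‖]
      have : ‖f₁ + v₂‖ = 0 := by nlinarith [norm_nonneg (f₁ + v₂), sq_nonneg ‖f₁ + v₂‖]
      exact norm_eq_zero.mp this
    have hf1 : f₁ = -v₂ := eq_neg_of_add_eq_zero_left hz
    refine ⟨hv1D, ?_, hf1, hA0v1.symm⟩
    have : v₂ = -f₁ := by rw [hf1, neg_neg]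
    rw [this]; exact Dhalf.neg_mem hf₁
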